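/- The first coefficients of the large-s inverse factorial expansion: with ψ = 1 − γ + β, the function F(s) = Γ(γ+s)Γ(αs+ψ)/(Γ(s+1)Γ(αs+β)) satisfies F(s) = α^{1−γ}(1 + c₁/(αs+ψ) + O(s^{−2})) as s → ∞ along the positive reals, where c₁ = (γ−1)(αγ + γ − 2β)/2. -/

import Mathlib

open scoped Real
open Complex Filter

/-- The Prabhakar (three-parameter Mittag-Leffler) function, defined by its
entire power series, with reciprocal Gamma understood as `0` at poles. -/
noncomputable def prabhakar (α β γ z : ℂ) : ℂ :=
  ∑' k : ℕ, (ascPochhammer ℂ k).eval γ * z ^ k / ((Nat.factorial k : ℂ) * Complex.Gamma (α * k + β))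


set_option maxHeartbeats 1000000
section GammaRatioAux
open Finset Topology

lemma abs_le_abs_of_uIcc {u t : ℝ} (ht : t ∈ Set.uIcc (0:ℝ) u) : |t| ≤ |u| := by
  rw [Set.uIcc_eq_union] at ht
  rcases ht with h | h <;> rw [Set.mem_Icc] at h <;> rw [abs_le] <;>
    constructor <;> nlinarith [le_abs_self u, neg_abs_le u]

lemma log_taylor2 {u : ℝ} (hu : |u| ≤ 1/2) :
    |Real.log (1+u) - (u - u^2/2)| ≤ 2 * |u|^3 := by
  have h0 : ∀ t ∈ Set.uIcc (0:ℝ) u, 0 < 1 + t := by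
    intro t ht
    have h1 := (abs_le_abs_of_uIcc ht).trans hu
    rw [abs_le] at h1; linarith [h1.1]
  have hderiv : ∀ t ∈ Set.uIcc (0:ℝ) u,
      HasDerivAt (fun t => Real.log (1+t) - (t - t^2/2)) (t^2/(1+t)) t := by
    intro t ht
    have hne : (1:ℝ) + t ≠ 0 := (h0 t ht).ne'
    have h1 : HasDerivAt (fun t : ℝ => 1 + t) 1 t := by
      simpa using (hasDerivAt_id t).const_add 1
    have h2 : HasDerivAt (fun t : ℝ => Real.log (1+t)) (1/(1+t)) t := by
      simpa using h1.log hne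
    have h3 : HasDerivAt (fun t : ℝ => t - t^2/2) (1 - t) t := by
      have := (hasDerivAt_id' t).sub ((hasDerivAt_pow 2 t).div_const 2)
      exact this.congr_deriv (by norm_num)
    have h4 := h2.sub h3
    refine h4.congr_deriv ?_
    field_simp
    ring
  have hcont : ContinuousOn (fun t : ℝ => t^2/(1+t)) (Set.uIcc 0 u) := by
    apply ContinuousOn.div (by fun_prop) (by fun_prop)
    intro t ht; exact (h0 t ht).ne'
  have hint : (∫ t in (0:ℝ)..u, t^2/(1+t))
      = Real.log (1+u) - (u - u^2/2) := by
    have h := intervalIntegral.integral_eq_sub_of_hasDerivAt hderiv hcont.intervalIntegrable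
    rw [h]; simp
  have hbd : ∀ t ∈ Set.uIoc (0:ℝ) u, ‖t^2/(1+t)‖ ≤ 2 * u^2 := by
    intro t ht
    have ht' := Set.uIoc_subset_uIcc ht
    have h1 := (abs_le_abs_of_uIcc ht').trans hu
    have h2 := abs_le_abs_of_uIcc ht'
    have h3 : (1:ℝ)/2 ≤ 1 + t := by rw [abs_le] at h1; linarith [h1.1]
    have h4 : t^2 ≤ u^2 := by
      have := _root_.sq_abs t ▸ _root_.sq_abs u ▸ pow_le_pow_left₀ (abs_nonneg t) h2 2
      nlinarith [_root_.sq_abs t, _root_.sq_abs u, pow_le_pow_left₀ (abs_nonneg t) h2 2]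
    rw [Real.norm_eq_abs, abs_div, _root_.abs_of_nonneg (sq_nonneg t), abs_of_pos (by linarith : (0:ℝ) < 1 + t)]
    rw [div_le_iff₀ (by linarith)]
    nlinarith [sq_nonneg t]
  have := intervalIntegral.norm_integral_le_of_norm_le_const hbd
  rw [hint] at this
  rw [Real.norm_eq_abs] at this
  calc |Real.log (1+u) - (u - u^2/2)| ≤ 2*u^2 * |u - 0| := this
    _ = 2 * |u|^3 := by rw [sub_zero, ← _root_.sq_abs]; ring

lemma Lterm (a b : ℝ) {y : ℝ} (hy : 2 + 2*|a| + 2*|b| ≤ y) :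
    |((a-b) * (Real.log (y+1) - Real.log y) - (Real.log (y+a) - Real.log (y+b)))
      - ((a-b)*(a+b-1)/2) * (1/(y*(y+1)))|
    ≤ (|(a-b)*(a+b-1)/2| + 2*|a-b| + 2*|a|^3 + 2*|b|^3) / y^3 := by
  have ha := abs_nonneg a; have hb := abs_nonneg b
  have ha' := neg_abs_le a; have ha'' := le_abs_self a
  have hb' := neg_abs_le b; have hb'' := le_abs_self b
  have hy2 : (2:ℝ) ≤ y := by linarith
  have hy0 : (0:ℝ) < y := by linarith
  have hya : (0:ℝ) < y + a := by linarith
  have hyb : (0:ℝ) < y + b := by linarith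
  have h1 : Real.log (y+1) - Real.log y = Real.log (1 + 1/y) := by
    rw [show (1:ℝ) + 1/y = (y+1)/y by field_simp, Real.log_div (by linarith) hy0.ne']
  have h2 : Real.log (y+a) - Real.log (y+b) = Real.log (1 + a/y) - Real.log (1 + b/y) := by
    rw [show (1:ℝ) + a/y = (y+a)/y by field_simp, show (1:ℝ) + b/y = (y+b)/y by field_simp,
      Real.log_div hya.ne' hy0.ne', Real.log_div hyb.ne' hy0.ne']
    ring
  have hu1 : |1/y| ≤ 1/2 := by
    rw [abs_of_pos (by positivity)]
    rw [div_le_div_iff₀ hy0 (by norm_num)]; linarith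
  have hua : |a/y| ≤ 1/2 := by
    rw [abs_div, abs_of_pos hy0, div_le_div_iff₀ hy0 (by norm_num)]; linarith
  have hub : |b/y| ≤ 1/2 := by
    rw [abs_div, abs_of_pos hy0, div_le_div_iff₀ hy0 (by norm_num)]; linarith
  have e1 := log_taylor2 hu1
  have ea := log_taylor2 hua
  have eb := log_taylor2 hub
  set E1 := Real.log (1+1/y) - (1/y - (1/y)^2/2) with hE1
  set Ea := Real.log (1+a/y) - (a/y - (a/y)^2/2) with hEa
  set Eb := Real.log (1+b/y) - (b/y - (b/y)^2/2) with hEb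
  set c := (a-b)*(a+b-1)/2 with hc
  have hexpand : ((a-b) * (Real.log (y+1) - Real.log y) - (Real.log (y+a) - Real.log (y+b)))
      - c * (1/(y*(y+1)))
      = ((a-b)*E1 + (-Ea) + Eb) + c * (1/(y^2*(y+1))) := by
    rw [h1, h2, hE1, hEa, hEb]
    field_simp
    ring
  rw [hexpand]
  have t1 : |(a-b)*E1 + (-Ea) + Eb| ≤ |(a-b)*E1| + |Ea| + |Eb| := by
    calc |(a-b)*E1 + (-Ea) + Eb| ≤ |(a-b)*E1| + |(-Ea)| + |Eb| := abs_add_three _ _ _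
      _ = |(a-b)*E1| + |Ea| + |Eb| := by rw [abs_neg]
  have t2 : |(a-b)*E1| ≤ 2*|a-b|/y^3 := by
    rw [abs_mul]
    calc |a - b| * |E1| ≤ |a - b| * (2 * (1/y)^3) := by
          refine mul_le_mul_of_nonneg_left (e1.trans (le_of_eq ?_)) (abs_nonneg _)
          rw [abs_of_pos (show (0:ℝ) < 1/y by positivity)]
      _ = 2*|a-b|/y^3 := by field_simp
  have t3 : |Ea| ≤ 2*|a|^3/y^3 := by
    refine ea.trans (le_of_eq ?_); rw [abs_div, abs_of_pos hy0]; field_simp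
  have t4 : |Eb| ≤ 2*|b|^3/y^3 := by
    refine eb.trans (le_of_eq ?_); rw [abs_div, abs_of_pos hy0]; field_simp
  have t5 : |c * (1/(y^2*(y+1)))| ≤ |c|/y^3 := by
    rw [abs_mul, abs_of_pos (show (0:ℝ) < 1/(y^2*(y+1)) by positivity)]
    rw [mul_one_div]
    have h35 : y^3 ≤ y^2*(y+1) := by
      calc y^3 = y^2*y := by ring
        _ ≤ y^2*(y+1) := by gcongr; linarith
    gcongr
  calc |((a-b)*E1 + (-Ea) + Eb) + c * (1/(y^2*(y+1)))|
      ≤ |(a-b)*E1 + (-Ea) + Eb| + |c * (1/(y^2*(y+1)))| := abs_add_le _ _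
    _ ≤ (|c| + 2*|a-b| + 2*|a|^3 + 2*|b|^3) / y^3 := by
        rw [add_div, add_div, add_div]
        linarith [t1, t2, t3, t4, t5]

lemma H_bound (a b : ℝ) {x : ℝ} (hx : 2 + 2*|a| + 2*|b| ≤ x) :
    |Real.log (Real.Gamma (x+a)) - Real.log (Real.Gamma (x+b)) - (a-b)*Real.log x
      - ((a-b)*(a+b-1)/2) * (1/x)|
    ≤ 4*(|(a-b)*(a+b-1)/2| + 2*|a-b| + 2*|a|^3 + 2*|b|^3)/x^2 := by
  have ha := abs_nonneg a; have hb := abs_nonneg b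
  have ha' := neg_abs_le a; have ha'' := le_abs_self a
  have hb' := neg_abs_le b; have hb'' := le_abs_self b
  have hx2 : (2:ℝ) ≤ x := by linarith
  have hx0 : (0:ℝ) < x := by linarith
  have hxa : (0:ℝ) < x + a := by linarith
  have hxb : (0:ℝ) < x + b := by linarith
  set c : ℝ := (a-b)*(a+b-1)/2 with hc
  set C₀ : ℝ := |c| + 2*|a-b| + 2*|a|^3 + 2*|b|^3 with hC₀
  have hC₀0 : 0 ≤ C₀ := by positivity
  set L : ℕ → ℝ := fun m =>
    (a-b) * (Real.log ((x+m)+1) - Real.log (x+m)) -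
      (Real.log ((x+m)+a) - Real.log ((x+m)+b)) with hL
  set t : ℕ → ℝ := fun m => 1/((x+m)*((x+m)+1)) with ht
  -- step 1: partial sums of L tend to H
  have hA : Tendsto (fun n => Real.BohrMollerup.logGammaSeq (x+a) n
      - Real.BohrMollerup.logGammaSeq (x+b) n) atTop
      (𝓝 (Real.log (Real.Gamma (x+a)) - Real.log (Real.Gamma (x+b)))) :=
    (Real.BohrMollerup.tendsto_log_gamma hxa).sub (Real.BohrMollerup.tendsto_log_gamma hxb)
  have hsum_id : ∀ n : ℕ, ∑ m ∈ range (n+1), L m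
      = (Real.BohrMollerup.logGammaSeq (x+a) n - Real.BohrMollerup.logGammaSeq (x+b) n)
        - (a-b)*Real.log x + (a-b)*(Real.log (x+(n+1:ℕ)) - Real.log n) := by
    intro n
    have htel : ∑ m ∈ range (n+1), (Real.log (x+(m+1:ℕ)) - Real.log (x+(m:ℕ)))
        = Real.log (x+(n+1:ℕ)) - Real.log (x+(0:ℕ)) := Finset.sum_range_sub (fun m => Real.log (x+(m:ℕ))) (n+1)
    have hsplit : ∑ m ∈ range (n+1), L m
        = (a-b) * ∑ m ∈ range (n+1), (Real.log (x+(m+1:ℕ)) - Real.log (x+(m:ℕ)))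
          - ∑ m ∈ range (n+1), (Real.log ((x+a)+m) - Real.log ((x+b)+m)) := by
      rw [Finset.mul_sum, ← Finset.sum_sub_distrib]
      apply Finset.sum_congr rfl
      intro m _
      simp only [hL]
      push_cast
      ring_nf
    rw [hsplit, htel]
    simp only [Real.BohrMollerup.logGammaSeq]
    rw [Finset.sum_sub_distrib]
    push_cast
    ring
  have hr : Tendsto (fun n : ℕ => Real.log (x+(n+1:ℕ)) - Real.log n) atTop (𝓝 0) := by
    have h2 : Tendsto (fun n : ℕ => (x+1) * (1/(n:ℝ)) + 1) atTop (𝓝 1) := by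
      have := tendsto_one_div_atTop_nhds_zero_nat.const_mul (x+1)
      simpa using this.add_const 1
    have h3 : Tendsto (fun n : ℕ => Real.log ((x+1) * (1/(n:ℝ)) + 1)) atTop (𝓝 0) := by
      have := h2.log one_ne_zero
      simpa using this
    apply h3.congr'
    filter_upwards [eventually_ge_atTop 1] with n hn
    have hn0 : (0:ℝ) < n := by exact_mod_cast hn
    rw [show (x+1) * (1/(n:ℝ)) + 1 = (x+(n+1:ℕ))/n by push_cast; field_simp; ring,
      Real.log_div (by push_cast; linarith) hn0.ne']
  have key1 : Tendsto (fun n => ∑ m ∈ range (n+1), L m) atTop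
      (𝓝 (Real.log (Real.Gamma (x+a)) - Real.log (Real.Gamma (x+b)) - (a-b)*Real.log x)) := by
    have := (hA.sub_const ((a-b)*Real.log x)).add (hr.const_mul (a-b))
    rw [mul_zero, add_zero] at this
    exact this.congr (fun n => (hsum_id n).symm)
  -- step 2: partial sums of c * t tend to c / x
  have hterm : ∀ m : ℕ, t m = 1/(x+(m:ℕ)) - 1/(x+(m+1:ℕ)) := by
    intro m
    have h1 : (0:ℝ) < x + m := by positivity
    have h2 : (0:ℝ) < x + m + 1 := by positivity
    rw [ht]
    push_cast
    field_simp
    ring_nf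
  have key2 : Tendsto (fun n => ∑ m ∈ range (n+1), c * t m) atTop (𝓝 (c * (1/x))) := by
    have htel : ∀ n, ∑ m ∈ range (n+1), t m = 1/(x+(0:ℕ)) - 1/(x+(n+1:ℕ)) := by
      intro n
      rw [Finset.sum_congr rfl (fun m _ => hterm m)]
      exact Finset.sum_range_sub' (fun m => 1/(x+(m:ℝ))) (n+1)
    have h4 : Tendsto (fun n : ℕ => 1/(x+(n+1:ℕ))) atTop (𝓝 0) := by
      have h5 : Tendsto (fun n : ℕ => x+((n:ℝ)+1)) atTop atTop := by
        apply tendsto_atTop_add_const_left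
        exact tendsto_atTop_add_const_right _ _ tendsto_natCast_atTop_atTop
      simpa [one_div, Pi.inv_def] using h5.inv_tendsto_atTop
    have h6 : Tendsto (fun n : ℕ => c * (1/(x+(0:ℕ)) - 1/(x+(n+1:ℕ)))) atTop (𝓝 (c * (1/x))) := by
      have := (tendsto_const_nhds (x := (1:ℝ)/(x+(0:ℕ)))).sub h4
      rw [sub_zero] at this
      have h7 := this.const_mul c
      simpa using h7
    exact h6.congr (fun n => by rw [← Finset.mul_sum, htel n])
  -- step 3: uniform bound on partial sums of differences
  have key3 : ∀ n : ℕ, |∑ m ∈ range (n+1), (L m - c * t m)| ≤ C₀ / (x-1)^2 := by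
    intro n
    have hprep : ∀ m ∈ range (n+1), |L m - c * t m|
        ≤ C₀ * (1/((x-1)+(m:ℕ))^2 - 1/((x-1)+(m+1:ℕ))^2) := by
      intro m _
      have hym : 2 + 2*|a| + 2*|b| ≤ x + m := by
        have : (0:ℝ) ≤ m := Nat.cast_nonneg m
        linarith
      have h8 := Lterm a b hym
      have hy0 : (0:ℝ) < x + m := by positivity
      have hy2 : (2:ℝ) ≤ x + m := by
        have : (0:ℝ) ≤ m := Nat.cast_nonneg m
        linarith
      refine h8.trans ?_
      have h9 : 1/(x+(m:ℝ))^3 ≤ 1/((x-1)+(m:ℕ))^2 - 1/((x-1)+(m+1:ℕ))^2 := by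
        push_cast
        have hd1 : (0:ℝ) < x - 1 + m := by linarith
        have hd2 : (0:ℝ) < x + m := hy0
        rw [show (x - 1 + ((m:ℝ)+1)) = x + m by ring, div_sub_div _ _ (by positivity) (by positivity),
          div_le_div_iff₀ (by positivity) (by positivity)]
        nlinarith [sq_nonneg (x+(m:ℝ)), sq_nonneg (x-1+(m:ℝ))]
      calc C₀ / (x+(m:ℝ))^3 = C₀ * (1/(x+(m:ℝ))^3) := by ring
        _ ≤ C₀ * (1/((x-1)+(m:ℕ))^2 - 1/((x-1)+(m+1:ℕ))^2) := by
            apply mul_le_mul_of_nonneg_left _ hC₀0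
            push_cast at h9 ⊢
            exact h9
    calc |∑ m ∈ range (n+1), (L m - c * t m)| ≤ ∑ m ∈ range (n+1), |L m - c * t m| :=
        Finset.abs_sum_le_sum_abs _ _
      _ ≤ ∑ m ∈ range (n+1), C₀ * (1/((x-1)+(m:ℕ))^2 - 1/((x-1)+(m+1:ℕ))^2) :=
        Finset.sum_le_sum hprep
      _ = C₀ * (1/((x-1)+(0:ℕ))^2 - 1/((x-1)+((n+1:ℕ):ℝ))^2) := by
          rw [← Finset.mul_sum, Finset.sum_range_sub' (fun m => 1/((x-1)+(m:ℝ))^2) (n+1)]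
      _ ≤ C₀ / (x-1)^2 := by
          have hd3 : (0:ℝ) < x - 1 + ((n+1:ℕ):ℝ) := by
            have : (0:ℝ) ≤ ((n+1:ℕ):ℝ) := Nat.cast_nonneg _
            linarith
          have : (0:ℝ) ≤ 1/((x-1)+((n+1:ℕ):ℝ))^2 := by positivity
          calc C₀ * (1/((x-1)+(0:ℕ))^2 - 1/((x-1)+((n+1:ℕ):ℝ))^2)
              ≤ C₀ * (1/((x-1)+(0:ℕ))^2) := by
                apply mul_le_mul_of_nonneg_left _ hC₀0
                linarith
            _ = C₀ / (x-1)^2 := by push_cast; rw [add_zero, mul_one_div]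
  -- step 4: take limits
  have key4 : Tendsto (fun n => |∑ m ∈ range (n+1), (L m - c * t m)|) atTop
      (𝓝 |(Real.log (Real.Gamma (x+a)) - Real.log (Real.Gamma (x+b)) - (a-b)*Real.log x)
          - c * (1/x)|) := by
    have := (key1.sub key2).abs
    apply this.congr
    intro n
    congr 1
    simp only [hL, Finset.sum_sub_distrib]
  have final : |(Real.log (Real.Gamma (x+a)) - Real.log (Real.Gamma (x+b)) - (a-b)*Real.log x)
      - c * (1/x)| ≤ C₀/(x-1)^2 :=
    le_of_tendsto key4 (Eventually.of_forall key3)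
  refine final.trans ?_
  rw [div_le_div_iff₀ (by nlinarith) (by positivity)]
  nlinarith [mul_nonneg hC₀0 (mul_nonneg (by linarith : (0:ℝ) ≤ 3*x-2) (by linarith : (0:ℝ) ≤ x-2))]

lemma ratio_bound (a b : ℝ) : ∃ C T : ℝ, 0 ≤ C ∧ 1 ≤ T ∧ ∀ x : ℝ, T ≤ x →
    |Real.Gamma (x+a) / Real.Gamma (x+b) * x ^ (b-a) - (1 + ((a-b)*(a+b-1)/2) * (1/x))|
      ≤ C/x^2 := by
  set c : ℝ := (a-b)*(a+b-1)/2 with hc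
  set C₀ : ℝ := 4*(|c| + 2*|a-b| + 2*|a|^3 + 2*|b|^3) with hC₀
  have hC₀0 : 0 ≤ C₀ := by positivity
  set C₁ : ℝ := |c| + C₀ with hC₁
  have hC₁0 : 0 ≤ C₁ := by positivity
  refine ⟨C₁^2 + C₀, max (2 + 2*|a| + 2*|b|) (max 1 C₁), by positivity, le_max_of_le_right (le_max_left _ _), ?_⟩
  intro x hx
  have hx1 : 2 + 2*|a| + 2*|b| ≤ x := le_trans (le_max_left _ _) hx
  have hx2 : (1:ℝ) ≤ x := le_trans (le_max_of_le_right (le_max_left _ _)) hx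
  have hx3 : C₁ ≤ x := le_trans (le_max_of_le_right (le_max_right _ _)) hx
  have hx0 : (0:ℝ) < x := by linarith
  have ha' := neg_abs_le a; have hb' := neg_abs_le b
  have ha := abs_nonneg a; have hb := abs_nonneg b
  have hxa : (0:ℝ) < x + a := by linarith
  have hxb : (0:ℝ) < x + b := by linarith
  set H : ℝ := Real.log (Real.Gamma (x+a)) - Real.log (Real.Gamma (x+b)) - (a-b)*Real.log x
    with hH
  have hHb : |H - c * (1/x)| ≤ C₀/x^2 := H_bound a b hx1
  have hHsmall : |H| ≤ C₁/x := by
    have h1 : |H| ≤ |H - c*(1/x)| + |c*(1/x)| := by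
      calc |H| = |(H - c*(1/x)) + c*(1/x)| := by ring_nf
        _ ≤ |H - c*(1/x)| + |c*(1/x)| := abs_add_le _ _
    have h2 : |c*(1/x)| = |c|/x := by
      rw [abs_mul, abs_of_pos (by positivity : (0:ℝ) < 1/x), mul_one_div]
    have h3 : C₀/x^2 ≤ C₀/x := by
      rw [div_le_div_iff₀ (by positivity) hx0]
      nlinarith [mul_nonneg (mul_nonneg hC₀0 hx0.le) (by linarith : (0:ℝ) ≤ x-1)]
    calc |H| ≤ C₀/x^2 + |c|/x := by rw [h2] at h1; linarith
      _ ≤ C₀/x + |c|/x := by linarith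
      _ = C₁/x := by rw [hC₁]; ring
  have hH1 : |H| ≤ 1 := by
    refine hHsmall.trans ?_
    rw [div_le_one hx0]; exact hx3
  have hexp : Real.Gamma (x+a) / Real.Gamma (x+b) * x ^ (b-a) = Real.exp H := by
    rw [hH, show Real.log (Real.Gamma (x+a)) - Real.log (Real.Gamma (x+b)) - (a-b)*Real.log x
      = Real.log (Real.Gamma (x+a)) - Real.log (Real.Gamma (x+b)) + (b-a)*Real.log x by ring]
    rw [Real.exp_add, Real.exp_sub, Real.exp_log (Real.Gamma_pos_of_pos hxa),
      Real.exp_log (Real.Gamma_pos_of_pos hxb), Real.rpow_def_of_pos hx0, mul_comm (Real.log x)]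
  rw [hexp]
  have hsplit : Real.exp H - (1 + c * (1/x)) = (Real.exp H - 1 - H) + (H - c * (1/x)) := by ring
  rw [hsplit]
  have hexp_bd : |Real.exp H - 1 - H| ≤ H^2 := Real.abs_exp_sub_one_sub_id_le hH1
  have hH2 : H^2 ≤ C₁^2/x^2 := by
    rw [← _root_.sq_abs H]
    calc |H|^2 ≤ (C₁/x)^2 := by
          apply pow_le_pow_left₀ (abs_nonneg H) hHsmall
      _ = C₁^2/x^2 := by rw [div_pow]
  calc |(Real.exp H - 1 - H) + (H - c * (1/x))| ≤ |Real.exp H - 1 - H| + |H - c*(1/x)| := abs_add_le _ _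
    _ ≤ C₁^2/x^2 + C₀/x^2 := by linarith [hexp_bd.trans hH2]
    _ = (C₁^2 + C₀)/x^2 := by ring

end GammaRatioAux

theorem inverse_factorial_expansion_first_coeff (α β γ : ℝ) (hα : 0 < α)
    (hγ : ∀ n : ℕ, γ ≠ -(n : ℝ)) :
    (fun s : ℝ =>
        Real.Gamma (γ + s) * Real.Gamma (α * s + (1 - γ + β)) /
            (Real.Gamma (s + 1) * Real.Gamma (α * s + β)) -
          α ^ (1 - γ) *
            (1 + (γ - 1) * (α * γ + γ - 2 * β) / 2 / (α * s + (1 - γ + β)))) =O[atTop]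
      fun s : ℝ => s ^ (-2 : ℝ) := by
  obtain ⟨C1, T1, hC10, hT1, hB1⟩ := ratio_bound γ 1
  obtain ⟨C2, T2, hC20, hT2, hB2⟩ := ratio_bound (1 - γ + β) β
  set ψ : ℝ := 1 - γ + β with hψ
  set c1' : ℝ := (γ-1)*(γ+1-1)/2 with hc1'
  set c2' : ℝ := (ψ-β)*(ψ+β-1)/2 with hc2'
  set c2'' : ℝ := c2'/α with hc2''
  set C2' : ℝ := C2/α^2 with hC2'
  have hC2'0 : 0 ≤ C2' := by positivity
  set M : ℝ := 1 + |c2''| + C2' with hM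
  set c1 : ℝ := (γ-1)*(α*γ+γ-2*β)/2 with hc1
  set K : ℝ := C1*M + (1+|c1'|)*C2' + |c1'*c2''| + 2*|c1*ψ|/α^2 with hK
  rw [Asymptotics.isBigO_iff]
  refine ⟨α^((1:ℝ)-γ) * K, ?_⟩
  filter_upwards [eventually_ge_atTop T1, eventually_ge_atTop (1:ℝ),
    eventually_ge_atTop (T2/α), eventually_ge_atTop ((2*|ψ|+1)/α)] with s hsT1 hs1 hsT2 hsψ
  have hs0 : (0:ℝ) < s := lt_of_lt_of_le one_pos hs1
  have hαs : (0:ℝ) < α*s := by positivity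
  have hT2' : T2 ≤ α*s := by rw [div_le_iff₀ hα] at hsT2; linarith
  have hψs : 2*|ψ|+1 ≤ α*s := by rw [div_le_iff₀ hα] at hsψ; linarith
  have hψ' := neg_abs_le ψ; have hψ'' := le_abs_self ψ
  have habsψ := abs_nonneg ψ
  have hαsψ : 0 < α*s+ψ := by linarith
  have hαsψ2 : α*s ≤ 2*(α*s+ψ) := by linarith
  have h1 := hB1 s hsT1
  have h2 := hB2 (α*s) hT2'
  set P : ℝ := Real.Gamma (s+γ) / Real.Gamma (s+1) * s ^ ((1:ℝ)-γ) with hP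
  set Q : ℝ := Real.Gamma (α*s+ψ) / Real.Gamma (α*s+β) * (α*s) ^ (β-ψ) with hQ
  -- convert h2 to 1/s form
  have he2 : |Q - (1 + c2''*(1/s))| ≤ C2'/s^2 := by
    have e : c2'*(1/(α*s)) = c2''*(1/s) := by
      rw [hc2'']; field_simp
    have e2 : C2/(α*s)^2 = C2'/s^2 := by
      rw [hC2']; field_simp
    rw [← e, ← e2]; exact h2
  -- algebraic identities
  have hc : c1 = (c1' + c2'')*α := by
    rw [hc1, hc2'', hc2', hc1', hψ]
    field_simp
    ring
  have hXid : (1+c1'*(1/s))*(1+c2''*(1/s)) - 1 - c1/(α*s+ψ)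
      = c1'*c2''*(1/s^2) + c1*ψ*(1/((α*s)*(α*s+ψ))) := by
    rw [hc]
    have hne2 : s*α+ψ ≠ 0 := by nlinarith
    field_simp
    ring
  have hdecomp : P*Q - (1 + c1/(α*s+ψ))
      = (P - (1 + c1'*(1/s)))*Q + (1+c1'*(1/s))*(Q - (1+c2''*(1/s)))
        + (c1'*c2''*(1/s^2) + c1*ψ*(1/((α*s)*(α*s+ψ)))) := by
    rw [← hXid]; ring
  -- bounds
  have hs2 : (1:ℝ) ≤ s^2 := by nlinarith
  have hone_div_s : 1/s ≤ 1 := by rw [div_le_one hs0]; exact hs1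
  have hone_div_s_pos : (0:ℝ) < 1/s := by positivity
  have hQbd : |Q| ≤ M := by
    have t1 : |Q| ≤ |Q - (1 + c2''*(1/s))| + |1 + c2''*(1/s)| := by
      calc |Q| = |(Q - (1 + c2''*(1/s))) + (1 + c2''*(1/s))| := by ring_nf
        _ ≤ _ := abs_add_le _ _
    have t2 : |1 + c2''*(1/s)| ≤ 1 + |c2''| := by
      calc |1 + c2''*(1/s)| ≤ |(1:ℝ)| + |c2''*(1/s)| := abs_add_le _ _
        _ = 1 + |c2''| * (1/s) := by
            rw [abs_one, abs_mul, abs_of_pos hone_div_s_pos]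
        _ ≤ 1 + |c2''| := by
            have := mul_le_mul_of_nonneg_left hone_div_s (abs_nonneg c2'')
            linarith [this]
    have t3 : C2'/s^2 ≤ C2' := by
      rw [div_le_iff₀ (by positivity)]
      nlinarith
    rw [hM]
    linarith [he2, t1, t2, t3]
  have hB : |1+c1'*(1/s)| ≤ 1 + |c1'| := by
    calc |1 + c1'*(1/s)| ≤ |(1:ℝ)| + |c1'*(1/s)| := abs_add_le _ _
      _ = 1 + |c1'| * (1/s) := by rw [abs_one, abs_mul, abs_of_pos hone_div_s_pos]
      _ ≤ 1 + |c1'| := by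
          have := mul_le_mul_of_nonneg_left hone_div_s (abs_nonneg c1')
          linarith [this]
  have hlast : |c1*ψ*(1/((α*s)*(α*s+ψ)))| ≤ (2*|c1*ψ|/α^2) * (1/s^2) := by
    rw [abs_mul, abs_of_pos (by positivity : (0:ℝ) < 1/((α*s)*(α*s+ψ)))]
    have t4 : 1/((α*s)*(α*s+ψ)) ≤ (2/α^2) * (1/s^2) := by
      rw [div_le_iff₀ (by positivity)]
      have expand : 2/α^2 * (1/s^2) * ((α*s)*(α*s+ψ)) = 2*(α*s+ψ)/(α*s) := by
        field_simp
      rw [expand, le_div_iff₀ hαs]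
      linarith
    calc |c1*ψ| * (1/((α*s)*(α*s+ψ))) ≤ |c1*ψ| * ((2/α^2) * (1/s^2)) :=
        mul_le_mul_of_nonneg_left t4 (abs_nonneg _)
      _ = (2*|c1*ψ|/α^2) * (1/s^2) := by ring
  have htotal : |P*Q - (1 + c1/(α*s+ψ))| ≤ K/s^2 := by
    rw [hdecomp]
    have b1 : |(P - (1 + c1'*(1/s)))*Q| ≤ (C1/s^2)*M := by
      rw [abs_mul]
      apply mul_le_mul h1 hQbd (abs_nonneg _) (by positivity)
    have b2 : |(1+c1'*(1/s))*(Q - (1+c2''*(1/s)))| ≤ (1+|c1'|)*(C2'/s^2) := by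
      rw [abs_mul]
      apply mul_le_mul hB he2 (abs_nonneg _) (by positivity)
    have b3 : |c1'*c2''*(1/s^2) + c1*ψ*(1/((α*s)*(α*s+ψ)))|
        ≤ |c1'*c2''| * (1/s^2) + (2*|c1*ψ|/α^2) * (1/s^2) := by
      calc |c1'*c2''*(1/s^2) + c1*ψ*(1/((α*s)*(α*s+ψ)))|
          ≤ |c1'*c2''*(1/s^2)| + |c1*ψ*(1/((α*s)*(α*s+ψ)))| := abs_add_le _ _
        _ ≤ |c1'*c2''| * (1/s^2) + (2*|c1*ψ|/α^2) * (1/s^2) := by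
            rw [abs_mul (c1'*c2''), abs_of_pos (by positivity : (0:ℝ) < 1/s^2)]
            linarith [hlast]
    calc |(P - (1 + c1'*(1/s)))*Q + (1+c1'*(1/s))*(Q - (1+c2''*(1/s)))
          + (c1'*c2''*(1/s^2) + c1*ψ*(1/((α*s)*(α*s+ψ))))|
        ≤ |(P - (1 + c1'*(1/s)))*Q| + |(1+c1'*(1/s))*(Q - (1+c2''*(1/s)))|
          + |c1'*c2''*(1/s^2) + c1*ψ*(1/((α*s)*(α*s+ψ)))| := abs_add_three _ _ _
      _ ≤ (C1/s^2)*M + (1+|c1'|)*(C2'/s^2) + (|c1'*c2''| * (1/s^2) + (2*|c1*ψ|/α^2) * (1/s^2)) := by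
          linarith [b1, b2, b3]
      _ = K/s^2 := by rw [hK]; field_simp; ring
  -- identity
  have hiden : Real.Gamma (γ+s) * Real.Gamma (α*s+ψ) / (Real.Gamma (s+1) * Real.Gamma (α*s+β))
      = α^((1:ℝ)-γ)*(P*Q) := by
    have hpow1 : (α*s) ^ (β-ψ) = α^(γ-(1:ℝ)) * s^(γ-(1:ℝ)) := by
      rw [show β - ψ = γ-(1:ℝ) by rw [hψ]; ring, Real.mul_rpow hα.le hs0.le]
    have hpow2 : (α^((1:ℝ)-γ)) * α^(γ-(1:ℝ)) = 1 := by
      rw [← Real.rpow_add hα]; norm_num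
    have hpow3 : (s^((1:ℝ)-γ)) * s^(γ-(1:ℝ)) = 1 := by
      rw [← Real.rpow_add hs0]; norm_num
    rw [hP, hQ, hpow1, show Real.Gamma (γ+s) = Real.Gamma (s+γ) by rw [add_comm]]
    calc Real.Gamma (s+γ) * Real.Gamma (α*s+ψ) / (Real.Gamma (s+1) * Real.Gamma (α*s+β))
        = Real.Gamma (s+γ) * Real.Gamma (α*s+ψ) / (Real.Gamma (s+1) * Real.Gamma (α*s+β))
          * ((α^((1:ℝ)-γ) * α^(γ-(1:ℝ))) * (s^((1:ℝ)-γ) * s^(γ-(1:ℝ)))) := by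
          rw [hpow2, hpow3]; ring
      _ = α^((1:ℝ)-γ)*((Real.Gamma (s+γ) / Real.Gamma (s+1) * s^((1:ℝ)-γ))
          * (Real.Gamma (α*s+ψ) / Real.Gamma (α*s+β) * (α^(γ-(1:ℝ)) * s^(γ-(1:ℝ))))) := by
          ring
  -- final
  have heq : Real.Gamma (γ+s) * Real.Gamma (α*s+ψ) / (Real.Gamma (s+1) * Real.Gamma (α*s+β))
      - α^((1:ℝ)-γ)*(1 + c1/(α*s+ψ))
      = α^((1:ℝ)-γ)*(P*Q - (1 + c1/(α*s+ψ))) := by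
    rw [hiden]; ring
  rw [Real.norm_eq_abs, Real.norm_eq_abs]
  have hnorm : |s^(-2:ℝ)| = 1/s^2 := by
    rw [abs_of_pos (Real.rpow_pos_of_pos hs0 _), show (-2:ℝ) = -((2:ℕ):ℝ) by norm_num,
      Real.rpow_neg hs0.le, Real.rpow_natCast, one_div]
  rw [hnorm, heq, abs_mul, abs_of_pos (Real.rpow_pos_of_pos hα _)]
  calc α^((1:ℝ)-γ) * |P*Q - (1 + c1/(α*s+ψ))| ≤ α^((1:ℝ)-γ) * (K/s^2) :=
      mul_le_mul_of_nonneg_left htotal (Real.rpow_pos_of_pos hα _).le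
    _ = α^((1:ℝ)-γ) * K * (1/s^2) := by ring
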